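/- Let a < c < b be real numbers and h a real number. Define k : ℝ × ℝ → ℝ by k(x,t) = x − t for a ≤ t ≤ x ≤ c and for c ≤ t ≤ x ≤ b, and k(x,t) = (x − t) + h·(c − t)·(x − c) for a ≤ t ≤ c ≤ x ≤ b. Then ∫ₐᵇ (∫ₐˣ k(x,t)² dt) dx = (h²/9)(ρs)³ + (h/3)(ρs)²(ρ+s) + (1/12)(ρ+s)⁴, where ρ = c − a and s = b − c. -/

import Mathlib

lemma cubeInt (A B C D l u : ℝ) (f : ℝ → ℝ)
    (hf : ∀ t ∈ Set.uIcc l u, f t = A + B*t + C*t^2 + D*t^3) :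
    ∫ t in l..u, f t
      = (A*u + B*u^2/2 + C*u^3/3 + D*u^4/4) - (A*l + B*l^2/2 + C*l^3/3 + D*l^4/4) := by
  rw [intervalIntegral.integral_congr hf]
  apply intervalIntegral.integral_eq_sub_of_hasDerivAt
  · intro x _
    have h0 := ((((hasDerivAt_pow 1 x).const_mul A).add
        (((hasDerivAt_pow 2 x).const_mul B).div_const 2)).add
        (((hasDerivAt_pow 3 x).const_mul C).div_const 3)).add
        (((hasDerivAt_pow 4 x).const_mul D).div_const 4)
    norm_num at h0 ⊢
    convert h0 using 2
    case e'_8 => simp only [Pi.add_apply]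
    all_goals ring
  · apply Continuous.intervalIntegrable
    continuity

theorem stmt_3 (a c b h : ℝ) (hac : a < c) (hcb : c < b)
    (k : ℝ → ℝ → ℝ)
    (hk : ∀ x t, k x t = if t ≤ c ∧ c ≤ x then (x - t) + h * (c - t) * (x - c) else x - t) :
    ∫ x in a..b, (∫ t in a..x, (k x t) ^ 2)
    = (h ^ 2 / 9) * ((c - a) * (b - c)) ^ 3
      + (h / 3) * ((c - a) * (b - c)) ^ 2 * ((c - a) + (b - c))
      + (1 / 12) * ((c - a) + (b - c)) ^ 4 := by
  have hinner1 : ∀ x, x ≤ c → (∫ t in a..x, (k x t)^2) = (x-a)^3/3 := by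
    intro x hx
    rw [cubeInt (x^2) (-(2*x)) 1 0 a x (fun t => (k x t)^2) (fun t _ => by
      rw [hk]; split_ifs with ht
      · have hxc : x = c := le_antisymm hx ht.2
        subst hxc; ring
      · ring)]
    ring
  have hinner2 : ∀ x, c ≤ x → (∫ t in a..x, (k x t)^2) =
      ((x + h*c*(x-c))^2*(c-a) - (x + h*c*(x-c))*(1+h*(x-c))*(c^2-a^2)
        + (1+h*(x-c))^2*(c^3-a^3)/3) + (x-c)^3/3 := by
    intro x hx
    have hrep : (fun t => (k x t)^2) = fun t => ((x-t) + h*(x-c)*(c - min t c))^2 := by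
      funext t; rw [hk]
      rcases le_or_gt t c with h1 | h1
      · rw [if_pos ⟨h1, hx⟩, min_eq_left h1]; ring
      · rw [if_neg fun hh => absurd hh.1 (not_le.mpr h1), min_eq_right h1.le]; ring
    have hcont : Continuous fun t : ℝ => ((x-t) + h*(x-c)*(c - min t c))^2 :=
      ((continuous_const.sub continuous_id).add (continuous_const.mul
        (continuous_const.sub (continuous_id.min continuous_const)))).pow 2
    have i1 : IntervalIntegrable (fun t => (k x t)^2) MeasureTheory.volume a c := by
      rw [hrep]; exact hcont.intervalIntegrable a c
    have i2 : IntervalIntegrable (fun t => (k x t)^2) MeasureTheory.volume c x := by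
      rw [hrep]; exact hcont.intervalIntegrable c x
    rw [← intervalIntegral.integral_add_adjacent_intervals i1 i2]
    rw [cubeInt ((x + h*c*(x-c))^2) (-(2*(x + h*c*(x-c))*(1+h*(x-c)))) ((1+h*(x-c))^2) 0 a c
        (fun t => (k x t)^2) (fun t ht => by
          have ht' : t ≤ c := ((Set.uIcc_of_le hac.le) ▸ ht).2
          rw [hk, if_pos ⟨ht', hx⟩]; ring),
      cubeInt (x^2) (-(2*x)) 1 0 c x (fun t => (k x t)^2) (fun t ht => by
          have ht' : c ≤ t := ((Set.uIcc_of_le hx) ▸ ht).1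
          rw [hk]; split_ifs with hcc
          · have htc : t = c := le_antisymm hcc.1 ht'
            subst htc; ring
          · ring)]
    ring
  have cont2 : Continuous fun x : ℝ => ((x + h*c*(x-c))^2*(c-a)
      - (x + h*c*(x-c))*(1+h*(x-c))*(c^2-a^2)
      + (1+h*(x-c))^2*(c^3-a^3)/3) + (x-c)^3/3 := by continuity
  have o1 : IntervalIntegrable (fun x => ∫ t in a..x, (k x t)^2) MeasureTheory.volume a c := by
    rw [intervalIntegrable_iff_integrableOn_Ioc_of_le hac.le]
    exact ((Continuous.integrableOn_Ioc (by continuity : Continuous fun x : ℝ => (x-a)^3/3)).congr_fun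
      (fun x hx => (hinner1 x hx.2).symm) measurableSet_Ioc)
  have o2 : IntervalIntegrable (fun x => ∫ t in a..x, (k x t)^2) MeasureTheory.volume c b := by
    rw [intervalIntegrable_iff_integrableOn_Ioc_of_le hcb.le]
    exact ((cont2.integrableOn_Ioc).congr_fun
      (fun x hx => (hinner2 x hx.1.le).symm) measurableSet_Ioc)
  rw [← intervalIntegral.integral_add_adjacent_intervals o1 o2]
  rw [cubeInt (-(a^3)/3) (a^2) (-a) (1/3) a c (fun x => ∫ t in a..x, (k x t)^2)
      (fun x hx => by
        rw [hinner1 x ((Set.uIcc_of_le hac.le ▸ hx).2)]; ring),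
    cubeInt (h^2*c^4*(c-a) + h*c^2*(1-h*c)*(c^2-a^2) + (1-h*c)^2*(c^3-a^3)/3 - c^3/3)
      (-(2*(1+h*c)*h*c^2*(c-a)) - (c^2-a^2)*((1+h*c)*(1-h*c) - h^2*c^2)
        + 2*h*(1-h*c)*(c^3-a^3)/3 + c^2)
      ((c-a)*(1+h*c)^2 - (c^2-a^2)*(1+h*c)*h + (c^3-a^3)*h^2/3 - c)
      (1/3) c b (fun x => ∫ t in a..x, (k x t)^2)
      (fun x hx => by
        rw [hinner2 x ((Set.uIcc_of_le hcb.le ▸ hx).1)]; ring)]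
  ring
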